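/- Fix h > 0, k > 0, σ > 0, g > 0 with k²σ/g > 1/2. Then for every integer n ≥ 2, (nkσ + g/(kn))·tanh(nkh) ≠ (kσ + g/k)·tanh(kh); i.e., the dispersion equation λ·kn·coth(nkh) − σk²n² − g = 0 has no solution λ common with the n = 1 case. -/

import Mathlib

lemma tanh_lt_tanh_aux {x y : ℝ} (hxy : x < y) : Real.tanh x < Real.tanh y := by
  rw [Real.tanh_eq_sinh_div_cosh, Real.tanh_eq_sinh_div_cosh,
    div_lt_div_iff₀ (Real.cosh_pos x) (Real.cosh_pos y)]
  have h1 : 0 < Real.sinh (y - x) := Real.sinh_pos_iff.mpr (by linarith)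
  rw [Real.sinh_sub] at h1
  nlinarith

lemma tanh_pos_aux {x : ℝ} (hx : 0 < x) : 0 < Real.tanh x := by
  rw [Real.tanh_eq_sinh_div_cosh]
  exact div_pos (Real.sinh_pos_iff.mpr hx) (Real.cosh_pos x)

theorem dispersion_no_common_solution (h k σ g : ℝ)
    (hh : h > 0) (hk : k > 0) (hσ : σ > 0) (hg : g > 0)
    (hC : k^2 * σ / g > 1/2) :
    ∀ n : ℕ, 2 ≤ n →
      ((n : ℝ) * k * σ + g / (k * n)) * Real.tanh (n * k * h) ≠
        (k * σ + g / k) * Real.tanh (k * h) := by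
  intro n hn
  have hn2 : (2 : ℝ) ≤ (n : ℝ) := by exact_mod_cast hn
  have hkn : (0 : ℝ) < k * n := by positivity
  have hkg : 2 * (k^2 * σ) > g := by
    rw [gt_iff_lt, lt_div_iff₀ hg] at hC; linarith
  -- coefficient inequality
  have hcoef : k * σ + g / k < (n : ℝ) * k * σ + g / (k * n) := by
    rw [← sub_pos]
    have e : (n:ℝ) * k * σ + g / (k * n) - (k * σ + g / k) =
        ((n:ℝ) - 1) * (k * σ - g / (k * n)) := by
      field_simp
      ring
    rw [e]
    have h2 : g / (k * n) < k * σ := by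
      rw [div_lt_iff₀ hkn]
      nlinarith
    have h1 : (0:ℝ) < (n:ℝ) - 1 := by linarith
    nlinarith
  have htanh : Real.tanh (k * h) ≤ Real.tanh ((n:ℝ) * k * h) := by
    apply le_of_lt
    apply tanh_lt_tanh_aux
    nlinarith [mul_pos hk hh]
  have htpos : 0 < Real.tanh (k * h) := tanh_pos_aux (by positivity)
  have hBpos : 0 < k * σ + g / k := by positivity
  apply ne_of_gt
  calc (k * σ + g / k) * Real.tanh (k * h)
      < ((n : ℝ) * k * σ + g / (k * n)) * Real.tanh (k * h) :=
        (mul_lt_mul_iff_of_pos_right htpos).mpr hcoef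
    _ ≤ ((n : ℝ) * k * σ + g / (k * n)) * Real.tanh ((n:ℝ) * k * h) := by
        apply mul_le_mul_of_nonneg_left htanh (by positivity)
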